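/- Any linear map x: s → s such that s ⊂ D(x*) and x*(s) ⊂ s (where x* is the Hilbert-space adjoint of x viewed as an unbounded operator on ℓ₂ with domain s) is automatically continuous as a map from the Fréchet space s to itself. -/

import Mathlib

/-- The `n`-th norm `|ξ|_n = (Σ_j |ξ_j|² j^{2n})^{1/2}` of the space `s` of rapidly
decreasing sequences (indices shifted: `j : ℕ` stands for the positive integer `j+1`). -/
noncomputable def pnorm (n : ℕ) (ξ : ℕ → ℂ) : ℝ :=
  Real.sqrt (∑' j : ℕ, ‖ξ j‖ ^ 2 * ((j : ℝ) + 1) ^ (2 * n))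

/-- The dual norm `|ξ|_{-n} = (Σ_j |ξ_j|² j^{-2n})^{1/2}`. -/
noncomputable def mnorm (n : ℕ) (ξ : ℕ → ℂ) : ℝ :=
  Real.sqrt (∑' j : ℕ, ‖ξ j‖ ^ 2 / ((j : ℝ) + 1) ^ (2 * n))

/-- Membership in the space `s` of rapidly decreasing sequences. -/
def InS (ξ : ℕ → ℂ) : Prop :=
  ∀ n : ℕ, Summable fun j : ℕ => ‖ξ j‖ ^ 2 * ((j : ℝ) + 1) ^ (2 * n)

/-- Membership in the space `s'` of slowly increasing sequences. -/
def InS' (ξ : ℕ → ℂ) : Prop :=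
  ∃ n : ℕ, Summable fun j : ℕ => ‖ξ j‖ ^ 2 / ((j : ℝ) + 1) ^ (2 * n)

/-- The pairing `⟨ξ, η⟩ = Σ_j ξ_j conj(η_j)` extending the `ℓ₂` inner product. -/
noncomputable def pairing (ξ η : ℕ → ℂ) : ℂ := ∑' j : ℕ, ξ j * (starRingEnd ℂ) (η j)


open scoped ENNReal

namespace S8

/-- weighted square summand -/
noncomputable def wsq (n : ℕ) (ξ : ℕ → ℂ) (j : ℕ) : ℝ := ‖ξ j‖ ^ 2 * ((j : ℝ) + 1) ^ (2 * n)

lemma wsq_nonneg (n : ℕ) (ξ : ℕ → ℂ) (j : ℕ) : 0 ≤ wsq n ξ j := by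
  unfold wsq; positivity

lemma pnorm_def (n : ℕ) (ξ : ℕ → ℂ) : pnorm n ξ = Real.sqrt (∑' j, wsq n ξ j) := rfl

lemma pnorm_nonneg (n : ℕ) (ξ : ℕ → ℂ) : 0 ≤ pnorm n ξ := Real.sqrt_nonneg _

lemma one_le_base (j : ℕ) : (1:ℝ) ≤ (j : ℝ) + 1 := by
  have := Nat.cast_nonneg (α := ℝ) j; linarith

lemma sq_pnorm (n : ℕ) (ξ : ℕ → ℂ) : pnorm n ξ ^ 2 = ∑' j, wsq n ξ j :=
  Real.sq_sqrt (tsum_nonneg (wsq_nonneg n ξ))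

/-- the weighted vector -/
noncomputable def wvec (n : ℕ) (ξ : ℕ → ℂ) (j : ℕ) : ℂ := ξ j * ((((j:ℝ)+1)^n : ℝ) : ℂ)

lemma norm_wvec_sq (n : ℕ) (ξ : ℕ → ℂ) (j : ℕ) : ‖wvec n ξ j‖ ^ 2 = wsq n ξ j := by
  unfold wvec wsq
  rw [norm_mul, mul_pow, Complex.norm_real, Real.norm_eq_abs,
    abs_of_nonneg (by positivity), ← pow_mul, mul_comm n 2]

noncomputable def toL2 (ξ : ℕ → ℂ) (h : Summable fun j => ‖ξ j‖ ^ 2) : lp (fun _ : ℕ => ℂ) 2 :=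
  ⟨ξ, memℓp_gen (by
    have : ((2:ℝ≥0∞)).toReal = ((2:ℕ):ℝ) := by norm_num
    rw [this]
    simpa only [Real.rpow_natCast] using h)⟩

lemma toL2_apply (ξ : ℕ → ℂ) (h) (j : ℕ) : (toL2 ξ h : ℕ → ℂ) j = ξ j := rfl

lemma norm_toL2 (ξ : ℕ → ℂ) (h : Summable fun j => ‖ξ j‖ ^ 2) :
    ‖toL2 ξ h‖ = Real.sqrt (∑' j, ‖ξ j‖ ^ 2) := by
  rw [lp.norm_eq_tsum_rpow (by norm_num) (toL2 ξ h)]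
  have h2 : ((2:ℝ≥0∞)).toReal = ((2:ℕ):ℝ) := by norm_num
  rw [h2]
  simp only [Real.rpow_natCast, toL2_apply]
  rw [show (1/((2:ℕ):ℝ)) = (1/2 : ℝ) by norm_num, ← Real.sqrt_eq_rpow]

lemma summable_norm_wvec {n : ℕ} {ξ : ℕ → ℂ} (h : Summable (wsq n ξ)) :
    Summable fun j => ‖wvec n ξ j‖ ^ 2 := by
  simpa only [norm_wvec_sq] using h

lemma pnorm_eq_norm {n : ℕ} {ξ : ℕ → ℂ} (h : Summable (wsq n ξ)) :
    pnorm n ξ = ‖toL2 (wvec n ξ) (summable_norm_wvec h)‖ := by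
  rw [norm_toL2, pnorm_def]
  congr 1
  exact tsum_congr fun j => (norm_wvec_sq n ξ j).symm

lemma summable_wsq_add {n : ℕ} {ξ η : ℕ → ℂ} (h1 : Summable (wsq n ξ))
    (h2 : Summable (wsq n η)) : Summable (wsq n (ξ + η)) := by
  refine Summable.of_nonneg_of_le (wsq_nonneg n _) (fun j => ?_) (((h1.add h2)).mul_left 2)
  have hb : (0:ℝ) ≤ ((j:ℝ)+1) ^ (2*n) := by positivity
  have h3 : ‖(ξ + η) j‖ ≤ ‖ξ j‖ + ‖η j‖ := norm_add_le _ _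
  have h4 : ‖(ξ + η) j‖ ^ 2 ≤ 2 * (‖ξ j‖ ^ 2 + ‖η j‖ ^ 2) := by
    nlinarith [norm_nonneg ((ξ + η) j), sq_nonneg (‖ξ j‖ - ‖η j‖)]
  unfold wsq
  calc ‖(ξ + η) j‖ ^ 2 * ((j:ℝ)+1) ^ (2*n) ≤ 2 * (‖ξ j‖ ^ 2 + ‖η j‖ ^ 2) * ((j:ℝ)+1) ^ (2*n) :=
        mul_le_mul_of_nonneg_right h4 hb
    _ = 2 * (‖ξ j‖ ^ 2 * ((j:ℝ)+1) ^ (2*n) + ‖η j‖ ^ 2 * ((j:ℝ)+1) ^ (2*n)) := by ring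

lemma pnorm_add_le {n : ℕ} {ξ η : ℕ → ℂ} (h1 : Summable (wsq n ξ))
    (h2 : Summable (wsq n η)) : pnorm n (ξ + η) ≤ pnorm n ξ + pnorm n η := by
  rw [pnorm_eq_norm (summable_wsq_add h1 h2), pnorm_eq_norm h1, pnorm_eq_norm h2]
  have he : toL2 (wvec n (ξ + η)) (summable_norm_wvec (summable_wsq_add h1 h2)) =
      toL2 (wvec n ξ) (summable_norm_wvec h1) + toL2 (wvec n η) (summable_norm_wvec h2) := by
    apply lp.ext
    rw [lp.coeFn_add]
    funext j
    show wvec n (ξ + η) j = wvec n ξ j + wvec n η j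
    unfold wvec
    simp [add_mul]
  rw [he]
  exact norm_add_le _ _

lemma pnorm_smul (n : ℕ) (c : ℂ) (ξ : ℕ → ℂ) : pnorm n (c • ξ) = ‖c‖ * pnorm n ξ := by
  rw [pnorm_def, pnorm_def]
  have : ∀ j, wsq n (c • ξ) j = ‖c‖ ^ 2 * wsq n ξ j := by
    intro j
    unfold wsq
    rw [Pi.smul_apply, smul_eq_mul, norm_mul, mul_pow]
    ring
  rw [tsum_congr this, tsum_mul_left, Real.sqrt_mul (by positivity), Real.sqrt_sq (norm_nonneg c)]

lemma pnorm_zero (n : ℕ) : pnorm n (0 : ℕ → ℂ) = 0 := by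
  have : ∀ j, wsq n (0 : ℕ → ℂ) j = 0 := by intro j; unfold wsq; simp
  rw [pnorm_def, tsum_congr this, tsum_zero, Real.sqrt_zero]

lemma pnorm_mono {n m : ℕ} (hnm : n ≤ m) {ξ : ℕ → ℂ} (h : Summable (wsq m ξ)) :
    pnorm n ξ ≤ pnorm m ξ := by
  rw [pnorm_def, pnorm_def]
  apply Real.sqrt_le_sqrt
  have hle : ∀ j, wsq n ξ j ≤ wsq m ξ j := fun j =>
    mul_le_mul_of_nonneg_left (pow_le_pow_right₀ (one_le_base j) (by omega)) (sq_nonneg _)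
  exact Summable.tsum_le_tsum hle (Summable.of_nonneg_of_le (wsq_nonneg n ξ) hle h) h

lemma wsq_zero_eq (ξ : ℕ → ℂ) (j : ℕ) : wsq 0 ξ j = ‖ξ j‖ ^ 2 := by unfold wsq; simp

lemma pnorm_zero_eq (ξ : ℕ → ℂ) : pnorm 0 ξ = Real.sqrt (∑' j, ‖ξ j‖ ^ 2) := by
  rw [pnorm_def]; exact congrArg _ (tsum_congr (wsq_zero_eq ξ))

lemma coord_le_pnorm {ξ : ℕ → ℂ} (h : Summable (wsq 0 ξ)) (j : ℕ) : ‖ξ j‖ ≤ pnorm 0 ξ := by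
  rw [pnorm_def, Real.le_sqrt (norm_nonneg _) (tsum_nonneg (wsq_nonneg 0 ξ))]
  calc ‖ξ j‖ ^ 2 = wsq 0 ξ j := (wsq_zero_eq ξ j).symm
    _ ≤ ∑' i, wsq 0 ξ i := Summable.le_tsum h j fun i _ => wsq_nonneg 0 ξ i

lemma eq_zero_of_pnorm_eq_zero {n : ℕ} {ξ : ℕ → ℂ} (h : Summable (wsq n ξ))
    (h0 : pnorm n ξ = 0) : ξ = 0 := by
  have ht : ∑' j, wsq n ξ j = 0 := by
    have := sq_pnorm n ξ
    rw [h0] at this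
    simpa using this.symm
  funext j
  have h1 : wsq n ξ j ≤ 0 := ht ▸ Summable.le_tsum h j fun i _ => wsq_nonneg n ξ i
  have h2 : wsq n ξ j = 0 := le_antisymm h1 (wsq_nonneg n ξ j)
  unfold wsq at h2
  have hb : (0:ℝ) < ((j:ℝ)+1) ^ (2*n) := by positivity
  have : ‖ξ j‖ ^ 2 = 0 := by
    by_contra hne
    exact hne (by nlinarith [sq_nonneg ‖ξ j‖])
  simpa using pow_eq_zero_iff (n := 2) (by norm_num) |>.mp (by simpa using this)

/-! ### InS closure lemmas -/

lemma inS_summable {ξ : ℕ → ℂ} (h : InS ξ) (n : ℕ) : Summable (wsq n ξ) := h n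

lemma InS_zero : InS (0 : ℕ → ℂ) := by
  intro n
  have : ∀ j, wsq n (0 : ℕ → ℂ) j = 0 := by intro j; unfold wsq; simp
  exact (summable_zero).congr fun j => (this j).symm

lemma InS_add {ξ η : ℕ → ℂ} (h1 : InS ξ) (h2 : InS η) : InS (ξ + η) := fun n =>
  summable_wsq_add (h1 n) (h2 n)

lemma InS_smul (c : ℂ) {ξ : ℕ → ℂ} (h : InS ξ) : InS (c • ξ) := by
  intro n
  have : ∀ j, wsq n (c • ξ) j = ‖c‖ ^ 2 * wsq n ξ j := by
    intro j; unfold wsq; rw [Pi.smul_apply, smul_eq_mul, norm_mul, mul_pow]; ring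
  exact ((h n).mul_left (‖c‖ ^ 2)).congr fun j => (this j).symm

lemma InS_neg {ξ : ℕ → ℂ} (h : InS ξ) : InS (-ξ) := by
  have := InS_smul (-1 : ℂ) h
  simpa using this

lemma InS_sub {ξ η : ℕ → ℂ} (h1 : InS ξ) (h2 : InS η) : InS (ξ - η) := by
  have := InS_add h1 (InS_neg h2)
  simpa [sub_eq_add_neg] using this

/-- standard basis vector -/
def e (k : ℕ) : ℕ → ℂ := fun j => if j = k then 1 else 0

lemma InS_e (k : ℕ) : InS (e k) := by
  intro n
  apply summable_of_ne_finset_zero (s := {k})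
  intro j hj
  simp only [Finset.mem_singleton] at hj
  simp [e, hj]

/-! ### pairing lemmas -/

lemma pairing_e (μ : ℕ → ℂ) (k : ℕ) : pairing μ (e k) = μ k := by
  unfold pairing
  rw [tsum_eq_single k]
  · simp [e]
  · intro b hb; simp [e, hb]

lemma pairing_eq_inner {ξ η : ℕ → ℂ} (hξ : Summable fun j => ‖ξ j‖ ^ 2)
    (hη : Summable fun j => ‖η j‖ ^ 2) :
    pairing ξ η = inner (𝕜 := ℂ) (toL2 η hη) (toL2 ξ hξ) := by
  rw [lp.inner_eq_tsum]
  exact tsum_congr fun j => by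
    simp only [RCLike.inner_apply, toL2_apply]

lemma summable_sq_of_wsq {ξ : ℕ → ℂ} (h : Summable (wsq 0 ξ)) :
    Summable fun j => ‖ξ j‖ ^ 2 :=
  h.congr fun j => wsq_zero_eq ξ j

lemma norm_pairing_le {ξ η : ℕ → ℂ} (hξ : Summable (wsq 0 ξ)) (hη : Summable (wsq 0 η)) :
    ‖pairing ξ η‖ ≤ pnorm 0 ξ * pnorm 0 η := by
  rw [pairing_eq_inner (summable_sq_of_wsq hξ) (summable_sq_of_wsq hη)]
  calc ‖inner (𝕜 := ℂ) (toL2 η _) (toL2 ξ _)‖ ≤ ‖toL2 η (summable_sq_of_wsq hη)‖ *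
        ‖toL2 ξ (summable_sq_of_wsq hξ)‖ := norm_inner_le_norm _ _
    _ = pnorm 0 ξ * pnorm 0 η := by
        rw [norm_toL2, norm_toL2, pnorm_zero_eq, pnorm_zero_eq]; ring

lemma summable_wsq_neg {n : ℕ} {ξ : ℕ → ℂ} (h : Summable (wsq n ξ)) :
    Summable (wsq n (-ξ)) :=
  h.congr fun j => by unfold wsq; simp

lemma summable_wsq_sub {n : ℕ} {ξ η : ℕ → ℂ} (h1 : Summable (wsq n ξ))
    (h2 : Summable (wsq n η)) : Summable (wsq n (ξ - η)) := by
  have := summable_wsq_add h1 (summable_wsq_neg h2)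
  exact this.congr fun j => by rw [sub_eq_add_neg]

lemma pairing_sub_left {ξ₁ ξ₂ η : ℕ → ℂ} (h1 : Summable (wsq 0 ξ₁))
    (h2 : Summable (wsq 0 ξ₂)) (hη : Summable (wsq 0 η)) :
    pairing (ξ₁ - ξ₂) η = pairing ξ₁ η - pairing ξ₂ η := by
  have h12 : Summable (wsq 0 (ξ₁ - ξ₂)) := summable_wsq_sub h1 h2
  rw [pairing_eq_inner (summable_sq_of_wsq h12) (summable_sq_of_wsq hη),
    pairing_eq_inner (summable_sq_of_wsq h1) (summable_sq_of_wsq hη),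
    pairing_eq_inner (summable_sq_of_wsq h2) (summable_sq_of_wsq hη)]
  rw [show toL2 (ξ₁ - ξ₂) (summable_sq_of_wsq h12) =
      toL2 ξ₁ (summable_sq_of_wsq h1) - toL2 ξ₂ (summable_sq_of_wsq h2) from
    lp.ext (by rw [lp.coeFn_sub]; rfl)]
  exact inner_sub_right _ _ _

lemma pnorm_neg (n : ℕ) (ξ : ℕ → ℂ) : pnorm n (-ξ) = pnorm n ξ := by
  have := pnorm_smul n (-1 : ℂ) ξ
  simpa using this

/-! ### truncated coordinate vector -/

variable (y : (ℕ → ℂ) → (ℕ → ℂ)) (q : ℕ)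

noncomputable def g (K : ℕ) (ζ : ℕ → ℂ) : ℕ → ℂ :=
  fun k => if k < K then pairing ζ (y (e k)) else 0

lemma summable_wsq_g (n K : ℕ) (ζ : ℕ → ℂ) : Summable (wsq n (g y K ζ)) := by
  apply summable_of_ne_finset_zero (s := Finset.range K)
  intro k hk
  simp only [Finset.mem_range] at hk
  simp [wsq, g, hk]

lemma g_coord {x : (ℕ → ℂ) → (ℕ → ℂ)}
    (hadj : ∀ ξ η, InS ξ → InS η → pairing (x ξ) η = pairing ξ (y η))
    (hyS : ∀ η, InS η → InS (y η)) {ζ : ℕ → ℂ} (hζ : InS ζ) (k : ℕ) :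
    (x ζ) k = pairing ζ (y (e k)) := by
  have h := hadj ζ (e k) hζ (InS_e k)
  rwa [pairing_e] at h

lemma pnorm_g_le {x : (ℕ → ℂ) → (ℕ → ℂ)}
    (hadj : ∀ ξ η, InS ξ → InS η → pairing (x ξ) η = pairing ξ (y η))
    (hyS : ∀ η, InS η → InS (y η)) (hxS : ∀ ξ, InS ξ → InS (x ξ))
    (K : ℕ) {ζ : ℕ → ℂ} (hζ : InS ζ) :
    pnorm q (g y K ζ) ≤ pnorm q (x ζ) := by
  rw [pnorm_def, pnorm_def]
  apply Real.sqrt_le_sqrt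
  have hle : ∀ k, wsq q (g y K ζ) k ≤ wsq q (x ζ) k := by
    intro k
    by_cases hk : k < K
    · have : g y K ζ k = (x ζ) k := by
        rw [g_coord y hadj hyS hζ k]; simp [g, hk]
      unfold wsq; rw [this]
    · have : g y K ζ k = 0 := by simp [g, hk]
      unfold wsq; rw [this]
      simpa [wsq] using wsq_nonneg q (x ζ) k
  exact Summable.tsum_le_tsum hle (summable_wsq_g y q K ζ) (inS_summable (hxS ζ hζ) q)

lemma g_add (K : ℕ) (hyS : ∀ η, InS η → InS (y η)) {ζ ξ₁ : ℕ → ℂ} (hζ : InS ζ) (hξ₁ : InS ξ₁) :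
    g y K ζ = g y K ξ₁ + g y K (ζ - ξ₁) := by
  funext k
  simp only [Pi.add_apply, g]
  by_cases hk : k < K
  · simp only [hk, if_true]
    have := pairing_sub_left (inS_summable hζ 0) (inS_summable hξ₁ 0) (inS_summable (hyS (e k) (InS_e k)) 0)
    rw [this]; ring
  · simp [hk]

/-- Sum `B` controlling the truncated vector via Cauchy-Schwarz -/
noncomputable def Bsum (K : ℕ) : ℝ :=
  ∑ k ∈ Finset.range K, ((k:ℝ)+1) ^ (2*q) * pnorm 0 (y (e k)) ^ 2

lemma Bsum_nonneg (K : ℕ) : 0 ≤ Bsum y q K :=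
  Finset.sum_nonneg fun k _ => mul_nonneg (by positivity) (sq_nonneg _)

lemma pnorm_g_bound (hyS : ∀ η, InS η → InS (y η)) (K : ℕ) {μ : ℕ → ℂ} (hμ : InS μ) :
    pnorm q (g y K μ) ≤ pnorm 0 μ * Real.sqrt (Bsum y q K) := by
  rw [pnorm_def]
  have ht : ∑' k, wsq q (g y K μ) k = ∑ k ∈ Finset.range K, wsq q (g y K μ) k := by
    apply tsum_eq_sum
    intro k hk
    simp only [Finset.mem_range] at hk
    simp [wsq, g, hk]
  rw [ht]
  have hb : ∑ k ∈ Finset.range K, wsq q (g y K μ) k ≤ pnorm 0 μ ^ 2 * Bsum y q K := by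
    rw [Bsum, Finset.mul_sum]
    apply Finset.sum_le_sum
    intro k hk
    simp only [Finset.mem_range] at hk
    have hg : g y K μ k = pairing μ (y (e k)) := by simp [g, hk]
    unfold wsq
    rw [hg]
    have hcs := norm_pairing_le (inS_summable hμ 0) (inS_summable (hyS (e k) (InS_e k)) 0)
    have h2 : ‖pairing μ (y (e k))‖ ^ 2 ≤ (pnorm 0 μ * pnorm 0 (y (e k))) ^ 2 :=
      pow_le_pow_left₀ (norm_nonneg _) hcs 2
    calc ‖pairing μ (y (e k))‖ ^ 2 * ((k:ℝ)+1) ^ (2*q)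
        ≤ (pnorm 0 μ * pnorm 0 (y (e k))) ^ 2 * ((k:ℝ)+1) ^ (2*q) :=
          mul_le_mul_of_nonneg_right h2 (by positivity)
      _ = pnorm 0 μ ^ 2 * (((k:ℝ)+1) ^ (2*q) * pnorm 0 (y (e k)) ^ 2) := by ring
  calc Real.sqrt (∑ k ∈ Finset.range K, wsq q (g y K μ) k) ≤
      Real.sqrt (pnorm 0 μ ^ 2 * Bsum y q K) := Real.sqrt_le_sqrt hb
    _ = pnorm 0 μ * Real.sqrt (Bsum y q K) := by
        rw [Real.sqrt_mul (sq_nonneg _), Real.sqrt_sq (pnorm_nonneg _ _)]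

/-! ### the step lemma -/

lemma x_zero {x : (ℕ → ℂ) → (ℕ → ℂ)}
    (hsmul : ∀ (c : ℂ) ξ, InS ξ → x (c • ξ) = c • x ξ) : x 0 = 0 := by
  have h := hsmul 0 0 InS_zero
  simpa using h

lemma step {x : (ℕ → ℂ) → (ℕ → ℂ)}
    (hxS : ∀ ξ, InS ξ → InS (x ξ))
    (hadd : ∀ ξ η, InS ξ → InS η → x (ξ + η) = x ξ + x η)
    (hsmul : ∀ (c : ℂ) ξ, InS ξ → x (c • ξ) = c • x ξ)
    (hyS : ∀ η, InS η → InS (y η))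
    (hadj : ∀ ξ η, InS ξ → InS η → pairing (x ξ) η = pairing ξ (y η))
    (hcon : ∀ r : ℕ, ∀ C : ℝ, 0 < C → ∃ ξ, InS ξ ∧ C * pnorm r ξ < pnorm q (x ξ))
    (ξ₀ : ℕ → ℂ) (hξ₀ : InS ξ₀) (m : ℕ) (δ : ℝ) (hδ : 0 < δ) :
    ∃ ξ₁ δ', InS ξ₁ ∧ pnorm m (ξ₁ - ξ₀) ≤ δ / 2 ∧ 0 < δ' ∧ δ' ≤ δ / 2 ∧
      ∀ ζ, InS ζ → pnorm 0 (ζ - ξ₁) ≤ 2 * δ' → (m : ℝ) + 1/2 ≤ pnorm q (x ζ) := by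
  set P := pnorm q (x ξ₀) with hP
  have hPnn : 0 ≤ P := pnorm_nonneg _ _
  set C : ℝ := ((m : ℝ) + 2 + P) / (δ / 2) with hC
  have hCpos : 0 < C := by positivity
  obtain ⟨η, hη, hlt⟩ := hcon m C hCpos
  have hη0 : pnorm m η ≠ 0 := by
    intro h0
    have hη' : η = 0 := eq_zero_of_pnorm_eq_zero (inS_summable hη m) h0
    rw [hη', x_zero hsmul] at hlt
    rw [pnorm_zero, pnorm_zero, mul_zero] at hlt
    exact lt_irrefl 0 hlt
  have hηpos : 0 < pnorm m η := lt_of_le_of_ne (pnorm_nonneg _ _) (Ne.symm hη0)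
  set c : ℂ := (((δ/2) / pnorm m η : ℝ) : ℂ) with hc
  have hcnorm : ‖c‖ = (δ/2) / pnorm m η := by
    rw [hc, Complex.norm_real, Real.norm_eq_abs, abs_of_pos (by positivity)]
  set ξ₁ := ξ₀ + c • η with hξ₁def
  have hξ₁ : InS ξ₁ := InS_add hξ₀ (InS_smul c hη)
  have hdiff : ξ₁ - ξ₀ = c • η := by rw [hξ₁def]; ring
  have hnd : pnorm m (ξ₁ - ξ₀) = δ / 2 := by
    rw [hdiff, pnorm_smul, hcnorm, div_mul_cancel₀ _ hη0]
  -- lower bound on pnorm q (x ξ₁)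
  have hxξ₁ : x ξ₁ = x ξ₀ + c • x η := by
    rw [hξ₁def, hadd ξ₀ (c • η) hξ₀ (InS_smul c hη), hsmul c η hη]
  have hxq : (m : ℝ) + 2 < pnorm q (x ξ₁) := by
    have h1 : pnorm q (c • x η) ≤ pnorm q (x ξ₁) + P := by
      have hsum1 : Summable (wsq q (x ξ₁)) := inS_summable (hxS ξ₁ hξ₁) q
      have hsum0 : Summable (wsq q (-(x ξ₀))) := summable_wsq_neg (inS_summable (hxS ξ₀ hξ₀) q)
      have := pnorm_add_le hsum1 hsum0
      have heq : x ξ₁ + -(x ξ₀) = c • x η := by rw [hxξ₁]; ring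
      rw [heq, pnorm_neg] at this
      exact this
    have h2 : C * (δ/2) < pnorm q (c • x η) := by
      rw [pnorm_smul, hcnorm]
      have hpos : 0 < δ/2 / pnorm m η := by positivity
      calc C * (δ/2) = (δ/2) / pnorm m η * (C * pnorm m η) := by
            field_simp
          _ < (δ/2) / pnorm m η * pnorm q (x η) :=
            mul_lt_mul_of_pos_left hlt hpos
    have h3 : C * (δ/2) = (m : ℝ) + 2 + P := by
      rw [hC]; field_simp
    linarith
  -- choose K
  have hsumx : Summable (wsq q (x ξ₁)) := inS_summable (hxS ξ₁ hξ₁) q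
  have htendsto := hsumx.hasSum.tendsto_sum_nat
  have htsum_gt : ((m : ℝ) + 1) ^ 2 < ∑' k, wsq q (x ξ₁) k := by
    have h4 : ((m:ℝ) + 1) ^ 2 < pnorm q (x ξ₁) ^ 2 := by
      have := pnorm_nonneg q (x ξ₁)
      nlinarith
    rwa [sq_pnorm] at h4
  obtain ⟨K, hK⟩ := (htendsto.eventually (eventually_gt_nhds htsum_gt)).exists
  -- partial sum equals pnorm of truncation
  have hgξ₁ : (m : ℝ) + 1 < pnorm q (g y K ξ₁) := by
    have heq : ∑' k, wsq q (g y K ξ₁) k = ∑ k ∈ Finset.range K, wsq q (x ξ₁) k := by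
      rw [tsum_eq_sum (s := Finset.range K) (by
        intro k hk
        simp only [Finset.mem_range] at hk
        simp [wsq, g, hk])]
      apply Finset.sum_congr rfl
      intro k hk
      simp only [Finset.mem_range] at hk
      have : g y K ξ₁ k = (x ξ₁) k := by
        rw [g_coord y hadj hyS hξ₁ k]; simp [g, hk]
      unfold wsq; rw [this]
    rw [pnorm_def, heq]
    rw [Real.lt_sqrt (by positivity)]
    exact hK
  -- choose δ'
  set B := Bsum y q K with hB
  have hBnn : 0 ≤ B := Bsum_nonneg y q K
  set δ' : ℝ := min (δ/2) (1 / (4 * (Real.sqrt B + 1))) with hδ'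
  have hδ'pos : 0 < δ' := by
    apply lt_min (by positivity)
    positivity
  refine ⟨ξ₁, δ', hξ₁, le_of_eq hnd, hδ'pos, min_le_left _ _, ?_⟩
  intro ζ hζ ht
  have hsub : InS (ζ - ξ₁) := InS_sub hζ hξ₁
  -- pnorm q (g K (ζ - ξ₁)) ≤ 1/2
  have hgd : pnorm q (g y K (ζ - ξ₁)) ≤ 1/2 := by
    have h5 := pnorm_g_bound y q hyS K hsub
    have h6 : pnorm 0 (ζ - ξ₁) * Real.sqrt B ≤ 2 * δ' * Real.sqrt B :=
      mul_le_mul_of_nonneg_right ht (Real.sqrt_nonneg _)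
    have h7 : 2 * δ' * Real.sqrt B ≤ 1/2 := by
      have h8 : δ' ≤ 1 / (4 * (Real.sqrt B + 1)) := min_le_right _ _
      have h9 : 0 < Real.sqrt B + 1 := by positivity
      have h10 : Real.sqrt B ≤ Real.sqrt B + 1 := by linarith
      calc 2 * δ' * Real.sqrt B ≤ 2 * (1 / (4 * (Real.sqrt B + 1))) * Real.sqrt B := by
            apply mul_le_mul_of_nonneg_right (by linarith) (Real.sqrt_nonneg _)
        _ = Real.sqrt B / (2 * (Real.sqrt B + 1)) := by
            field_simp
            ring
        _ ≤ 1/2 := by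
            rw [div_le_div_iff₀ (by positivity) (by norm_num)]
            nlinarith [Real.sqrt_nonneg B]
    linarith [h5, h6, h7]
  -- reverse triangle
  have htri : pnorm q (g y K ξ₁) ≤ pnorm q (g y K ζ) + pnorm q (g y K (ζ - ξ₁)) := by
    have hadd' : g y K ξ₁ = g y K ζ + -(g y K (ζ - ξ₁)) := by
      have hg := g_add y K hyS hζ hξ₁
      funext k
      have hk := congrFun hg k
      simp only [Pi.add_apply, Pi.neg_apply] at hk ⊢
      linear_combination -hk
    have h := pnorm_add_le (summable_wsq_g y q K ζ)
      (summable_wsq_neg (summable_wsq_g y q K (ζ - ξ₁)))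
    rw [pnorm_neg] at h
    rw [hadd']
    exact h
  have hfin : pnorm q (g y K ζ) ≤ pnorm q (x ζ) := pnorm_g_le y q hadj hyS hxS K hζ
  linarith

/-! ### Fatou-type lemma -/

lemma fatou {f : ℕ → ℕ → ℂ} {gl : ℕ → ℂ}
    (hlim : ∀ j, Filter.Tendsto (fun m => f m j) Filter.atTop (nhds (gl j)))
    (n : ℕ) {b : ℝ} (N : ℕ) (h : ∀ m, N ≤ m → ∑' j, wsq n (f m) j ≤ b)
    (hs : ∀ m, Summable (wsq n (f m))) :
    Summable (wsq n gl) ∧ ∑' j, wsq n gl j ≤ b := by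
  have key : ∀ J : ℕ, ∑ j ∈ Finset.range J, wsq n gl j ≤ b := by
    intro J
    have ht : Filter.Tendsto (fun m => ∑ j ∈ Finset.range J, wsq n (f m) j)
        Filter.atTop (nhds (∑ j ∈ Finset.range J, wsq n gl j)) := by
      apply tendsto_finset_sum
      intro j _
      have : Filter.Tendsto (fun m => ‖f m j‖ ^ 2 * ((j:ℝ)+1) ^ (2*n))
          Filter.atTop (nhds (‖gl j‖ ^ 2 * ((j:ℝ)+1) ^ (2*n))) :=
        (((hlim j).norm).pow 2).mul_const _
      exact this
    apply le_of_tendsto ht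
    filter_upwards [Filter.eventually_ge_atTop N] with m hm
    calc ∑ j ∈ Finset.range J, wsq n (f m) j ≤ ∑' j, wsq n (f m) j :=
          Summable.sum_le_tsum _ (fun j _ => wsq_nonneg n (f m) j) (hs m)
      _ ≤ b := h m hm
  have hsum : Summable (wsq n gl) := summable_of_sum_range_le (wsq_nonneg n gl) key
  exact ⟨hsum, Summable.tsum_le_of_sum_range_le hsum key⟩

/-! ### the sequence -/

def T : Type := {p : (ℕ → ℂ) × ℝ // InS p.1 ∧ 0 < p.2}

lemma build_seq {x : (ℕ → ℂ) → (ℕ → ℂ)}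
    (hxS : ∀ ξ, InS ξ → InS (x ξ))
    (hadd : ∀ ξ η, InS ξ → InS η → x (ξ + η) = x ξ + x η)
    (hsmul : ∀ (c : ℂ) ξ, InS ξ → x (c • ξ) = c • x ξ)
    (hyS : ∀ η, InS η → InS (y η))
    (hadj : ∀ ξ η, InS ξ → InS η → pairing (x ξ) η = pairing ξ (y η))
    (hcon : ∀ r : ℕ, ∀ C : ℝ, 0 < C → ∃ ξ, InS ξ ∧ C * pnorm r ξ < pnorm q (x ξ)) :
    ∃ (ξs : ℕ → (ℕ → ℂ)) (δs : ℕ → ℝ),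
      δs 0 = 1 ∧ (∀ m, InS (ξs m)) ∧ (∀ m, 0 < δs m) ∧
      (∀ m, pnorm m (ξs (m+1) - ξs m) ≤ δs m / 2) ∧ (∀ m, δs (m+1) ≤ δs m / 2) ∧
      (∀ m, ∀ ζ, InS ζ → pnorm 0 (ζ - ξs (m+1)) ≤ 2 * δs (m+1) →
        (m:ℝ) + 1/2 ≤ pnorm q (x ζ)) := by
  classical
  have hstep : ∀ (m : ℕ) (p : T), ∃ (p' : T),
      pnorm m (p'.1.1 - p.1.1) ≤ p.1.2 / 2 ∧ p'.1.2 ≤ p.1.2 / 2 ∧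
      (∀ ζ, InS ζ → pnorm 0 (ζ - p'.1.1) ≤ 2 * p'.1.2 → (m:ℝ) + 1/2 ≤ pnorm q (x ζ)) := by
    intro m p
    obtain ⟨ξ₁, δ', h1, h2, h3, h4, h5⟩ :=
      step y q hxS hadd hsmul hyS hadj hcon p.1.1 p.2.1 m p.1.2 p.2.2
    exact ⟨⟨(ξ₁, δ'), h1, h3⟩, h2, h4, h5⟩
  choose f hf1 hf2 hf3 using hstep
  let F : ℕ → T := fun n => Nat.rec (⟨(0, 1), InS_zero, one_pos⟩ : T) f n
  have hFs : ∀ m, F (m + 1) = f m (F m) := fun m => rfl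
  refine ⟨fun m => (F m).1.1, fun m => (F m).1.2, rfl, fun m => (F m).2.1,
    fun m => (F m).2.2, fun m => ?_, fun m => ?_, fun m => ?_⟩
  · exact hf1 m (F m)
  · exact hf2 m (F m)
  · exact hf3 m (F m)

end S8

open S8 in
/-- Automatic continuity: any linear map `x : s → s` whose `ℓ₂`-adjoint is defined on
`s` and maps `s` into `s` (witnessed by `y` below) is continuous on the Fréchet space
`s`. -/
theorem stmt8 (x y : (ℕ → ℂ) → (ℕ → ℂ))
    (hxS : ∀ ξ, InS ξ → InS (x ξ))
    (hadd : ∀ ξ η, InS ξ → InS η → x (ξ + η) = x ξ + x η)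
    (hsmul : ∀ (c : ℂ) ξ, InS ξ → x (c • ξ) = c • x ξ)
    (hyS : ∀ η, InS η → InS (y η))
    (hadj : ∀ ξ η, InS ξ → InS η → pairing (x ξ) η = pairing ξ (y η)) :
    ∀ q : ℕ, ∃ r : ℕ, ∃ C : ℝ, 0 < C ∧ ∀ ξ, InS ξ → pnorm q (x ξ) ≤ C * pnorm r ξ := by
  intro q
  by_contra hcon0
  push_neg at hcon0
  have hcon : ∀ r : ℕ, ∀ C : ℝ, 0 < C → ∃ ξ, InS ξ ∧ C * pnorm r ξ < pnorm q (x ξ) := by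
    intro r C hC
    obtain ⟨ξ, h1, h2⟩ := hcon0 r C hC
    exact ⟨ξ, h1, h2⟩
  obtain ⟨ξs, δs, hδ0, hInS, hδpos, hstep, hδhalf, hball⟩ :=
    build_seq y q hxS hadd hsmul hyS hadj hcon
  -- telescoping estimate
  have htele : ∀ p n : ℕ, n ≤ p → ∀ m, p ≤ m → pnorm n (ξs m - ξs p) ≤ δs p - δs m := by
    intro p n hnp m hpm
    induction m with
    | zero =>
      have : p = 0 := Nat.le_zero.mp hpm
      subst this
      rw [sub_self, pnorm_zero, sub_self]
    | succ m ih =>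
      rcases Nat.lt_or_ge p (m+1) with hlt | hge
      · have hpm' : p ≤ m := Nat.lt_succ_iff.mp hlt
        have h1 := ih hpm'
        have hnm : n ≤ m := le_trans hnp hpm'
        have h2 : pnorm n (ξs (m+1) - ξs m) ≤ δs m / 2 := by
          calc pnorm n (ξs (m+1) - ξs m) ≤ pnorm m (ξs (m+1) - ξs m) :=
                pnorm_mono hnm (inS_summable (InS_sub (hInS (m+1)) (hInS m)) m)
            _ ≤ δs m / 2 := hstep m
        have h3 : pnorm n (ξs (m+1) - ξs p) ≤
            pnorm n (ξs (m+1) - ξs m) + pnorm n (ξs m - ξs p) := by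
          have h4 := pnorm_add_le (inS_summable (InS_sub (hInS (m+1)) (hInS m)) n)
            (inS_summable (InS_sub (hInS m) (hInS p)) n)
          have h5 : ξs (m+1) - ξs m + (ξs m - ξs p) = ξs (m+1) - ξs p := by ring
          rwa [h5] at h4
        have h6 := hδhalf m
        have h7 := hδpos (m+1)
        have h8 := hδpos m
        linarith
      · have : p = m + 1 := le_antisymm hpm hge
        subst this
        rw [sub_self, pnorm_zero, sub_self]
  have hδ2 : ∀ m, δs m ≤ 1 / 2 ^ m := by
    intro m
    induction m with
    | zero => simp [hδ0]
    | succ m ih =>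
      have := hδhalf m
      have h2 : (0:ℝ) < 2 ^ m := by positivity
      calc δs (m+1) ≤ δs m / 2 := this
        _ ≤ (1 / 2 ^ m) / 2 := by linarith
        _ = 1 / 2 ^ (m+1) := by rw [pow_succ]; ring
  -- coordinates are Cauchy
  have hcauchy : ∀ j, CauchySeq (fun m => ξs m j) := by
    intro j
    rw [Metric.cauchySeq_iff']
    intro ε hε
    obtain ⟨p, hp⟩ : ∃ p : ℕ, (1:ℝ) / 2 ^ p < ε := by
      obtain ⟨p, hp⟩ := pow_unbounded_of_one_lt (1/ε) (one_lt_two (α := ℝ))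
      refine ⟨p, ?_⟩
      rw [div_lt_iff₀ (by positivity)]
      rw [div_lt_iff₀ hε] at hp
      nlinarith [hε, pow_pos (zero_lt_two (α := ℝ)) p]
    refine ⟨p, fun m hm => ?_⟩
    have h1 : ‖ξs m j - ξs p j‖ ≤ pnorm 0 (ξs m - ξs p) := by
      have := coord_le_pnorm (inS_summable (InS_sub (hInS m) (hInS p)) 0) j
      simpa using this
    have h2 := htele p 0 (Nat.zero_le p) m hm
    have h3 := hδpos m
    have h4 := hδ2 p
    calc dist (ξs m j) (ξs p j) = ‖ξs m j - ξs p j‖ := by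
          rw [Complex.dist_eq]
      _ ≤ pnorm 0 (ξs m - ξs p) := h1
      _ ≤ δs p - δs m := h2
      _ < δs p := by linarith
      _ ≤ 1 / 2 ^ p := h4
      _ < ε := hp
  -- limit
  set ξI : ℕ → ℂ := fun j => Filter.limUnder Filter.atTop (fun m => ξs m j) with hξI
  have hlim : ∀ j, Filter.Tendsto (fun m => ξs m j) Filter.atTop (nhds (ξI j)) :=
    fun j => (hcauchy j).tendsto_limUnder
  -- ξI is in S
  have hInSI : InS ξI := by
    intro n
    have hfat := fatou (f := fun m => ξs m - ξs n) (gl := ξI - ξs n)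
      (fun j => by
        have := (hlim j).sub_const (ξs n j)
        simpa using this) n (b := δs n ^ 2) n
      (fun m hm => by
        have h1 := htele n n le_rfl m hm
        have h2 := hδpos m
        have h3 := hδpos n
        have h4 : pnorm n (ξs m - ξs n) ^ 2 ≤ δs n ^ 2 := by
          have h5 := pnorm_nonneg n (ξs m - ξs n)
          nlinarith
        rw [sq_pnorm] at h4
        exact h4)
      (fun m => inS_summable (InS_sub (hInS m) (hInS n)) n)
    have hsum : Summable (wsq n ((ξI - ξs n) + ξs n)) :=
      summable_wsq_add hfat.1 (inS_summable (hInS n) n)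
    exact hsum.congr fun j => by simp [wsq]
  -- pnorm 0 bound on the limit
  have h0lim : ∀ p, pnorm 0 (ξI - ξs p) ≤ δs p := by
    intro p
    have hfat := fatou (f := fun m => ξs m - ξs p) (gl := ξI - ξs p)
      (fun j => by
        have := (hlim j).sub_const (ξs p j)
        simpa using this) 0 (b := δs p ^ 2) p
      (fun m hm => by
        have h1 := htele p 0 (Nat.zero_le p) m hm
        have h2 := hδpos m
        have h3 := hδpos p
        have h4 : pnorm 0 (ξs m - ξs p) ^ 2 ≤ δs p ^ 2 := by
          have h5 := pnorm_nonneg 0 (ξs m - ξs p)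
          nlinarith
        rw [sq_pnorm] at h4
        exact h4)
      (fun m => inS_summable (InS_sub (hInS m) (hInS p)) 0)
    rw [pnorm_def]
    calc Real.sqrt (∑' j, wsq 0 (ξI - ξs p) j) ≤ Real.sqrt (δs p ^ 2) :=
          Real.sqrt_le_sqrt hfat.2
      _ = δs p := Real.sqrt_sq (le_of_lt (hδpos p))
  -- contradiction
  have hfinal : ∀ m : ℕ, (m : ℝ) + 1/2 ≤ pnorm q (x ξI) := by
    intro m
    apply hball m ξI hInSI
    have h1 := h0lim (m+1)
    have h2 := hδpos (m+1)
    linarith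
  obtain ⟨M, hM⟩ := exists_nat_gt (pnorm q (x ξI))
  have := hfinal M
  linarith
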